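/- Let G(z) = g(z)g(6z) − g(2z)g(3z) where g = Σ a(n)q^n is a formal power series satisfying a(2n) = a(2)a(n) − χ(2)·2^{k−1}·a(n/2) for all n (with a(n/2)=0 if 2∤n). Then the power series G = Σ c(n)q^n satisfies G | U_2 = χ(2)·2^{k−1}·G, i.e., c(2n) = χ(2)2^{k−1}c(n) for all n. -/

import Mathlib

open Finset

/-- Extract the terms with index divisible by `c` from a sum over a range. -/
lemma sum_ite_dvd_range (c M : ℕ) (hc : 0 < c) (G : ℕ → ℂ) :
    ∑ j ∈ Finset.range (M + 1), (if c ∣ j then G j else 0)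
      = ∑ t ∈ Finset.range (M / c + 1), G (c * t) := by
  rw [← Finset.sum_filter]
  refine Finset.sum_nbij' (fun j => j / c) (fun t => c * t) ?_ ?_ ?_ ?_ ?_
  · intro j hj
    simp only [mem_filter, mem_range] at hj ⊢
    have := Nat.div_le_div_right (c := c) (Nat.lt_succ_iff.mp hj.1)
    omega
  · intro t ht
    simp only [mem_range] at ht
    simp only [mem_filter, mem_range]
    refine ⟨?_, Dvd.intro t rfl⟩
    have : c * t ≤ c * (M / c) := Nat.mul_le_mul_left c (Nat.lt_succ_iff.mp ht)
    have := Nat.mul_div_le M c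
    omega
  · intro j hj
    simp only [mem_filter] at hj
    exact Nat.mul_div_cancel' hj.2
  · intro t _
    exact Nat.mul_div_cancel_left t hc
  · intro j hj
    simp only [mem_filter] at hj
    rw [Nat.mul_div_cancel' hj.2]

/-- Coefficient of a product where the second factor is a dilation by `c`. -/
lemma coeff_mul_dilate (c : ℕ) (hc : 0 < c) (f h : ℕ → ℂ) (m : ℕ) :
    PowerSeries.coeff m
        (PowerSeries.mk f * PowerSeries.mk (fun j => if c ∣ j then h (j / c) else 0))
      = ∑ t ∈ Finset.range (m / c + 1), f (m - c * t) * h t := by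
  rw [mul_comm, PowerSeries.coeff_mul, Finset.Nat.sum_antidiagonal_eq_sum_range_succ_mk]
  simp only [PowerSeries.coeff_mk]
  have : ∀ j ∈ Finset.range (m + 1),
      (if c ∣ j then h (j / c) else 0) * f (m - j)
        = (if c ∣ j then h (j / c) * f (m - j) else 0) := by
    intro j _; split <;> simp
  rw [Finset.sum_congr rfl this, sum_ite_dvd_range c m hc]
  refine Finset.sum_congr rfl fun t _ => ?_
  rw [Nat.mul_div_cancel_left t hc, mul_comm]

/-- The q-expansion of `G(z) = g(z)g(6z) − g(2z)g(3z)` where `g = Σ a(n)qⁿ`. -/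
noncomputable def Gser (a : ℕ → ℂ) : PowerSeries ℂ :=
  PowerSeries.mk a * PowerSeries.mk (fun m => if 6 ∣ m then a (m / 6) else 0)
    - PowerSeries.mk (fun m => if 2 ∣ m then a (m / 2) else 0)
      * PowerSeries.mk (fun m => if 3 ∣ m then a (m / 3) else 0)

/-- If `g = Σ a(n)qⁿ` satisfies the Hecke eigen-recursion at `2`:
`a(2n) = a(2)a(n) − χ(2)·2^{k−1}·a(n/2)` (with `a(n/2) = 0` if `2 ∤ n`), then
`G = g(z)g(6z) − g(2z)g(3z) = Σ c(n)qⁿ` satisfies `G | U₂ = χ(2)·2^{k−1}·G`, i.e.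
`c(2n) = χ(2)·2^{k−1}·c(n)` for all `n`. -/
theorem stmt19 (k : ℕ) (χ2 : ℂ) (a : ℕ → ℂ)
    (heig : ∀ n : ℕ,
      a (2 * n) = a 2 * a n - χ2 * 2 ^ (k - 1) * (if 2 ∣ n then a (n / 2) else 0)) :
    ∀ n : ℕ, PowerSeries.coeff (2 * n) (Gser a)
      = χ2 * 2 ^ (k - 1) * PowerSeries.coeff n (Gser a) := by
  intro n
  set lam : ℂ := χ2 * 2 ^ (k - 1) with hlam
  -- abbreviations for the sums
  set S : ℂ := ∑ t ∈ Finset.range (n / 3 + 1), a (n - 3 * t) * a t with hS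
  set A' : ℂ := ∑ t ∈ Finset.range (n / 6 + 1), a (n - 6 * t) * a t with hA'
  set B' : ℂ := ∑ t ∈ Finset.range (n / 3 + 1),
      (if 2 ∣ n - 3 * t then a ((n - 3 * t) / 2) else 0) * a t with hB'
  -- coefficient of q^m in g·g6 and g2·g3
  have hgg6 : ∀ m : ℕ, PowerSeries.coeff m
      (PowerSeries.mk a * PowerSeries.mk (fun j => if 6 ∣ j then a (j / 6) else 0))
      = ∑ t ∈ Finset.range (m / 6 + 1), a (m - 6 * t) * a t :=
    fun m => coeff_mul_dilate 6 (by norm_num) a a m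
  have hg2g3 : ∀ m : ℕ, PowerSeries.coeff m
      (PowerSeries.mk (fun j => if 2 ∣ j then a (j / 2) else 0)
        * PowerSeries.mk (fun j => if 3 ∣ j then a (j / 3) else 0))
      = ∑ t ∈ Finset.range (m / 3 + 1),
          (if 2 ∣ m - 3 * t then a ((m - 3 * t) / 2) else 0) * a t :=
    fun m => coeff_mul_dilate 3 (by norm_num) _ a m
  have hG : ∀ m : ℕ, PowerSeries.coeff m (Gser a)
      = (∑ t ∈ Finset.range (m / 6 + 1), a (m - 6 * t) * a t)
        - ∑ t ∈ Finset.range (m / 3 + 1),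
            (if 2 ∣ m - 3 * t then a ((m - 3 * t) / 2) else 0) * a t := by
    intro m
    rw [Gser, map_sub, hgg6, hg2g3]
  -- Step 1 : coeff (2n) (g·g6) = a 2 * S - lam * B'
  have h1 : (∑ t ∈ Finset.range (2 * n / 6 + 1), a (2 * n - 6 * t) * a t)
      = a 2 * S - lam * B' := by
    have hd : 2 * n / 6 = n / 3 := by omega
    rw [hd]
    have : ∀ t ∈ Finset.range (n / 3 + 1),
        a (2 * n - 6 * t) * a t
          = a 2 * (a (n - 3 * t) * a t)
            - lam * ((if 2 ∣ n - 3 * t then a ((n - 3 * t) / 2) else 0) * a t) := by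
      intro t ht
      simp only [mem_range] at ht
      have h3t : 3 * t ≤ n := by
        have := Nat.lt_succ_iff.mp ht
        omega
      have he : 2 * n - 6 * t = 2 * (n - 3 * t) := by omega
      rw [he, heig (n - 3 * t)]
      ring
    rw [Finset.sum_congr rfl this, Finset.sum_sub_distrib, ← Finset.mul_sum, ← Finset.mul_sum,
      hS, hB']
  -- Step 2 : coeff (2n) (g2·g3) = a 2 * S - lam * A'
  have h2 : (∑ t ∈ Finset.range (2 * n / 3 + 1),
        (if 2 ∣ 2 * n - 3 * t then a ((2 * n - 3 * t) / 2) else 0) * a t)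
      = a 2 * S - lam * A' := by
    have hstep : ∀ t ∈ Finset.range (2 * n / 3 + 1),
        (if 2 ∣ 2 * n - 3 * t then a ((2 * n - 3 * t) / 2) else 0) * a t
          = (if 2 ∣ t then a ((2 * n - 3 * t) / 2) * a t else 0) := by
      intro t ht
      simp only [mem_range] at ht
      have h3t : 3 * t ≤ 2 * n := by
        have := Nat.lt_succ_iff.mp ht
        have := Nat.div_mul_le_self (2 * n) 3
        nlinarith [Nat.lt_succ_iff.mp ht, Nat.div_mul_le_self (2 * n) 3]
      have hiff : (2 ∣ 2 * n - 3 * t) ↔ 2 ∣ t := by omega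
      simp only [hiff]
      split <;> simp
    rw [Finset.sum_congr rfl hstep, sum_ite_dvd_range 2 (2 * n / 3) (by norm_num)]
    have hd : 2 * n / 3 / 2 = n / 3 := by omega
    rw [hd]
    have : ∀ u ∈ Finset.range (n / 3 + 1),
        a ((2 * n - 3 * (2 * u)) / 2) * a (2 * u)
          = a 2 * (a (n - 3 * u) * a u)
            - lam * (if 2 ∣ u then a (n - 3 * u) * a (u / 2) else 0) := by
      intro u hu
      simp only [mem_range] at hu
      have h3u : 3 * u ≤ n := by
        have := Nat.lt_succ_iff.mp hu
        omega
      have he : (2 * n - 3 * (2 * u)) / 2 = n - 3 * u := by omega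
      rw [he, heig u]
      split <;> ring
    rw [Finset.sum_congr rfl this, Finset.sum_sub_distrib, ← Finset.mul_sum, ← Finset.mul_sum,
      sum_ite_dvd_range 2 (n / 3) (by norm_num)]
    have hd2 : n / 3 / 2 = n / 6 := by omega
    have hv : ∀ v : ℕ, n - 3 * (2 * v) = n - 6 * v := fun v => by omega
    have hv2 : ∀ v : ℕ, 2 * v / 2 = v := fun v => by omega
    simp only [hd2, hv, hv2]
    rw [hS, hA']
  rw [hG (2 * n), hG n, h1, h2]
  ring
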